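/- Let L be closed under a binary connective ∧ and a unary connective ¬, and let ⟨M, ⊨, f⟩ be a restricted fC-model that behaves classically with respect to ∧ and ¬ (for every m ∈ M: m ⊨ a∧b iff m ⊨ a and m ⊨ b; m ⊨ ¬a iff m ⊭ a). Then the operation C(A) = Th(f(Mod(A))) satisfies ∧-R (C(A ∪ {a∧b}) = C(A ∪ {a, b})), ¬-R1 (C(A ∪ {a, ¬a}) = L), and ¬-R2 (if C(A ∪ {¬a}) = L then a ∈ C(A)). -/
import Mathlib


/-- `ModSet sat A` is the set of models satisfying every formula of `A`. -/
def ModSet {M L : Type*} (sat : M → L → Prop) (A : Set L) : Set M :=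
  {m | ∀ a ∈ A, sat m a}

/-- `ThSet sat X` is the set of formulas satisfied by every model of `X`. -/
def ThSet {M L : Type*} (sat : M → L → Prop) (X : Set M) : Set L :=
  {a | ∀ m ∈ X, sat m a}

/-- The operation defined by a restricted fC-model whose satisfaction relation behaves
classically with respect to `∧` and `¬` satisfies `∧`-R, `¬`-R1 and `¬`-R2. -/
theorem stmt_11 {L M : Type*} [Nonempty L] (conj : L → L → L) (neg : L → L)
    (sat : M → L → Prop) (f : Set M → Set M)
    (hContr : ∀ X : Set M, f X ⊆ X)
    (hLCum : ∀ X Y : Set M, f X ⊆ Y → Y ⊆ X → f Y = f X)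
    (hCons : ∀ X : Set M, f X = ∅ → X = ∅)
    (hconj : ∀ (m : M) (a b : L), sat m (conj a b) ↔ sat m a ∧ sat m b)
    (hneg : ∀ (m : M) (a : L), sat m (neg a) ↔ ¬ sat m a)
    (C : Set L → Set L)
    (hC : ∀ A : Set L, C A = ThSet sat (f (ModSet sat A))) :
    (∀ (A : Set L) (a b : L), C (A ∪ {conj a b}) = C (A ∪ {a, b})) ∧
    (∀ (A : Set L) (a : L), C (A ∪ {a, neg a}) = Set.univ) ∧
    (∀ (A : Set L) (a : L), C (A ∪ {neg a}) = Set.univ → a ∈ C A) := by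
  refine ⟨?_, ?_, ?_⟩
  · intro A a b
    have hmod : ModSet sat (A ∪ {conj a b}) = ModSet sat (A ∪ {a, b}) := by
      ext m
      simp only [ModSet, Set.mem_setOf_eq, Set.mem_union, Set.mem_singleton_iff,
        Set.mem_insert_iff]
      constructor
      · intro h c hc
        rcases hc with hc | hc | hc
        · exact h c (Or.inl hc)
        · rw [hc]; exact ((hconj m a b).1 (h _ (Or.inr rfl))).1
        · rw [hc]; exact ((hconj m a b).1 (h _ (Or.inr rfl))).2
      · intro h c hc
        rcases hc with hc | hc
        · exact h c (Or.inl hc)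
        · rw [hc]
          exact (hconj m a b).2 ⟨h a (Or.inr (Or.inl rfl)), h b (Or.inr (Or.inr rfl))⟩
    rw [hC, hC, hmod]
  · intro A a
    have hempty : ModSet sat (A ∪ {a, neg a}) = ∅ := by
      ext m
      simp only [ModSet, Set.mem_setOf_eq, Set.mem_empty_iff_false, iff_false]
      intro h
      exact (hneg m a).1 (h (neg a) (Or.inr (Or.inr rfl))) (h a (Or.inr (Or.inl rfl)))
    rw [hC, hempty]
    have : f (∅ : Set M) = ∅ := Set.subset_empty_iff.1 (hContr ∅)
    rw [this]
    ext c; simp [ThSet]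
  · intro A a h
    have hfe : f (ModSet sat (A ∪ {neg a})) = ∅ := by
      by_contra hne
      obtain ⟨m, hm⟩ := Set.nonempty_iff_ne_empty.2 hne
      have hm' := hContr _ hm
      have hC1 := hC (A ∪ {neg a})
      have h1 : a ∈ C (A ∪ {neg a}) := h ▸ Set.mem_univ a
      have h2 : neg a ∈ C (A ∪ {neg a}) := h ▸ Set.mem_univ (neg a)
      rw [hC1] at h1 h2
      exact (hneg m a).1 (h2 m hm) (h1 m hm)
    have hmode : ModSet sat (A ∪ {neg a}) = ∅ := hCons _ hfe
    rw [hC]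
    intro m hm
    have hmA : m ∈ ModSet sat A := hContr _ hm
    by_contra hna
    have : m ∈ ModSet sat (A ∪ {neg a}) := by
      intro c hc
      rcases hc with hc | hc
      · exact hmA c hc
      · rw [Set.mem_singleton_iff] at hc; rw [hc]; exact (hneg m a).2 hna
    rw [hmode] at this; exact this
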